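/- arXiv:1605.09173 — 5 statements merged into one kernel-verified Lean document; each statement's English description precedes it below -/
import Mathlib

section
/- Let G be a transitive permutation group on a finite set Ω of size n generated by involutions ρ₀,…,ρ_{r−1} such that each Γ_i (the subgroup generated by all generators except ρ_i) is intransitive. Then r ≤ n − 1. -/
/-- If a transitive permutation group of degree `n` generated by `r` involutions
has all maximal parabolic subgroups intransitive, then `r ≤ n - 1`. -/
theorem rank_le_degree_sub_one
    {Ω : Type*} [Fintype Ω] {r : ℕ} (ρ : Fin r → Equiv.Perm Ω)
    (hinv : ∀ i, ρ i * ρ i = 1) (hne : ∀ i, ρ i ≠ 1)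
    (htrans : ∀ a b : Ω, ∃ g ∈ Subgroup.closure (Set.range ρ), g a = b)
    (hintrans : ∀ i : Fin r,
      ¬ ∀ a b : Ω, ∃ g ∈ Subgroup.closure (ρ '' {j | j ≠ i}), g a = b) :
    r ≤ Fintype.card Ω - 1 := by
  classical
  rcases Nat.eq_zero_or_pos r with hr | hr
  · omega
  -- the orbit relation of the maximal parabolic Γ i
  set R : Fin r → Ω → Ω → Prop :=
    fun i a b => ∃ g ∈ Subgroup.closure (ρ '' {j | j ≠ i}), g a = b with hR
  have Rrefl : ∀ i a, R i a a := fun i a => ⟨1, one_mem _, rfl⟩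
  have Rsymm : ∀ i a b, R i a b → R i b a := by
    rintro i a b ⟨g, hg, rfl⟩
    exact ⟨g⁻¹, inv_mem hg, Equiv.symm_apply_apply g a⟩
  have Rtrans : ∀ i a b c, R i a b → R i b c → R i a c := by
    rintro i a b c ⟨g, hg, rfl⟩ ⟨h, hh, rfl⟩
    exact ⟨h * g, mul_mem hh hg, rfl⟩
  -- for each i there is a point moved across a Γ i orbit by ρ i
  have hcross : ∀ i, ∃ a : Ω, ¬ R i a (ρ i a) := by
    intro i
    by_contra h
    push_neg at h
    apply hintrans i
    intro a b
    obtain ⟨g, hg, hab⟩ := htrans a b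
    have key : ∀ p : Ω, R i p (g p) := by
      refine Subgroup.closure_induction (k := Set.range ρ)
        (p := fun g _ => ∀ p : Ω, R i p (g p)) ?_ ?_ ?_ ?_ hg
      · rintro x ⟨j, rfl⟩ p
        rcases eq_or_ne j i with rfl | hj
        · exact h p
        · exact ⟨ρ j, Subgroup.subset_closure ⟨j, hj, rfl⟩, rfl⟩
      · intro p; exact Rrefl i p
      · intro x y _ _ hx hy p
        exact Rtrans i p (y p) (x (y p)) (hy p) (hx (y p))
      · intro x _ hx p
        have := hx (x⁻¹ p)
        rw [show x (x⁻¹ p) = p from Equiv.apply_symm_apply x p] at this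
        exact Rsymm i _ _ this
    rw [← hab]
    exact key a
  choose a ha using hcross
  -- the family of vectors: indicators differences plus the constant vector
  set w : Option (Fin r) → Ω → ℚ :=
    fun j => Option.elim j (fun _ => 1)
      (fun i x => (if x = a i then (1:ℚ) else 0) - (if x = ρ i (a i) then 1 else 0)) with hw
  have hΩ : Fintype.card Ω ≠ 0 := by
    have i0 : Fin r := ⟨0, hr⟩
    rcases isEmpty_or_nonempty Ω with h | h
    · exact absurd (fun (a b : Ω) => (IsEmpty.false a).elim) (hintrans i0)
    · simp [Fintype.card_ne_zero]
  -- linear independence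
  have hli : LinearIndependent ℚ w := by
    rw [Fintype.linearIndependent_iff]
    intro c hc
    have h0 : ∀ x : Ω, ∑ j, c j * w j x = 0 := by
      intro x
      have := congrFun hc x
      simpa [Finset.sum_apply] using this
    have hpair : ∀ φ : Ω → ℚ, ∑ j, c j * (∑ x, w j x * φ x) = 0 := by
      intro φ
      have : ∑ j, c j * (∑ x, w j x * φ x) = ∑ x, (∑ j, c j * w j x) * φ x := by
        simp only [Finset.mul_sum, Finset.sum_mul, mul_assoc]
        exact Finset.sum_comm
      rw [this]
      simp [h0]
    -- the constant coefficient vanishes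
    have hnone : c none = 0 := by
      have := hpair (fun _ => 1)
      have hs : ∀ j, (∑ x : Ω, w j x * 1) = if j = none then (Fintype.card Ω : ℚ) else 0 := by
        rintro (_ | i)
        · simp [hw, Finset.sum_const, Finset.card_univ]
        · simp [hw, Finset.sum_sub_distrib]
      rw [Finset.sum_congr rfl (fun j _ => by rw [hs j]), Fintype.sum_option] at this
      simp at this
      rcases this with h | h
      · exact h
      · exact absurd h (by exact_mod_cast hΩ)
    intro j
    rcases j with _ | i
    · exact hnone
    -- pair with the indicator of the Γ i orbit of a i
    have := hpair (fun x => if R i (a i) x then 1 else 0)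
    have hs : ∀ j, (∑ x : Ω, w j x * (if R i (a i) x then (1:ℚ) else 0))
        = if j = some i then 1 else if j = none then (∑ x : Ω, if R i (a i) x then (1:ℚ) else 0) else 0 := by
      rintro (_ | k)
      · simp [hw]
      · simp only [hw, Option.elim_some]
        have : ∀ b : Ω, ((if b = a k then (1:ℚ) else 0) - (if b = ρ k (a k) then 1 else 0))
            * (if R i (a i) b then 1 else 0)
            = (if b = a k then (if R i (a i) b then (1:ℚ) else 0) else 0)
              - (if b = ρ k (a k) then (if R i (a i) b then (1:ℚ) else 0) else 0) := by
          intro b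
          split_ifs <;> ring
        rw [Finset.sum_congr rfl (fun b _ => this b), Finset.sum_sub_distrib]
        rw [Finset.sum_ite_eq' Finset.univ (a k), Finset.sum_ite_eq' Finset.univ (ρ k (a k))]
        simp only [Finset.mem_univ, if_true]
        rcases eq_or_ne k i with h | hki
        · subst h
          rw [if_pos (Rrefl _ _), if_neg (ha _)]
          simp
        · -- a k and ρ k (a k) are in the same Γ i orbit
          have hmem : R i (a k) (ρ k (a k)) :=
            ⟨ρ k, Subgroup.subset_closure ⟨k, hki, rfl⟩, rfl⟩
          have heq : R i (a i) (a k) ↔ R i (a i) (ρ k (a k)) :=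
            ⟨fun h => Rtrans i _ _ _ h hmem, fun h => Rtrans i _ _ _ h (Rsymm i _ _ hmem)⟩
          simp only [Option.some.injEq, hki, if_false, reduceCtorEq]
          split_ifs with h1 h2 h2
          · ring
          · exact absurd (heq.mp h1) h2
          · exact absurd (heq.mpr h2) h1
          · ring
    rw [Finset.sum_congr rfl (fun j _ => by rw [hs j]), Fintype.sum_option] at this
    simp [hnone, Finset.sum_ite_eq'] at this
    exact this
  have hcard := hli.fintype_card_le_finrank
  rw [Module.finrank_fintype_fun_eq_card] at hcard
  simp only [Fintype.card_option, Fintype.card_fin] at hcard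
  omega
end

section
/- In a 2-fracture graph of a permutation group Γ (a graph on the permuted set with exactly two i-labeled edges per generator index i, each joining points in different Γ_i-orbits), every cycle contains either zero or exactly two edges with any given label i. In particular, a 2-fracture graph has no multiple edges. -/
open SimpleGraph

section Aux
variable {Ω : Type*} [DecidableEq Ω] {r : ℕ} (ρ : Fin r → Equiv.Perm Ω)

private lemma tf_step (hinv : ∀ i, ρ i * ρ i = 1) {j : Fin r} {x y a b : Ω}
    (hab : ρ j a = b) (h : s(x, y) = s(a, b)) : ρ j x = y := by
  rw [Sym2.eq_iff] at h
  rcases h with ⟨rfl, rfl⟩ | ⟨rfl, rfl⟩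
  · exact hab
  · rw [← hab]
    have h1 : (ρ j * ρ j) y = y := by rw [hinv]; rfl
    simpa [Equiv.Perm.mul_apply] using h1

private lemma tf_no_map_symm {H : Subgroup (Equiv.Perm Ω)} {a b : Ω}
    (h : ∀ g ∈ H, g a ≠ b) : ∀ g ∈ H, g b ≠ a := fun g hg hgb =>
  h g⁻¹ (H.inv_mem hg) (by rw [← hgb]; simp)

private lemma tf_no_cross {H : Subgroup (Equiv.Perm Ω)} {a b x y : Ω}
    (h : ∀ g ∈ H, g a ≠ b) (heq : s(x, y) = s(a, b)) : ∀ g ∈ H, g x ≠ y := by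
  rw [Sym2.eq_iff] at heq
  rcases heq with ⟨rfl, rfl⟩ | ⟨rfl, rfl⟩
  · exact h
  · exact tf_no_map_symm h

end Aux

/-- In a 2-fracture graph, every cycle contains zero or exactly two edges with a
given label, and edges with different labels are distinct (no multiple edges). -/
theorem two_fracture_cycle_zero_or_two_edges
    {Ω : Type*} [Fintype Ω] [DecidableEq Ω] {r : ℕ} (ρ : Fin r → Equiv.Perm Ω)
    (hinv : ∀ i, ρ i * ρ i = 1) (hne : ∀ i, ρ i ≠ 1)
    (hintrans : ∀ i : Fin r,
      ¬ ∀ a b : Ω, ∃ g ∈ Subgroup.closure (ρ '' {j | j ≠ i}), g a = b)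
    (f : Fin r → (Ω × Ω) × (Ω × Ω))
    (hf : ∀ i : Fin r,
      ρ i (f i).1.1 = (f i).1.2 ∧ ρ i (f i).2.1 = (f i).2.2 ∧
      s((f i).1.1, (f i).1.2) ≠ s((f i).2.1, (f i).2.2) ∧
      (∀ g ∈ Subgroup.closure (ρ '' {j | j ≠ i}), g (f i).1.1 ≠ (f i).1.2) ∧
      (∀ g ∈ Subgroup.closure (ρ '' {j | j ≠ i}), g (f i).2.1 ≠ (f i).2.2)) :
    (∀ (v : Ω)
      (w : (SimpleGraph.fromRel (fun x y =>
          ∃ i : Fin r, s(x, y) = s((f i).1.1, (f i).1.2) ∨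
            s(x, y) = s((f i).2.1, (f i).2.2))).Walk v v),
      w.IsCycle → ∀ i : Fin r,
        w.edges.count s((f i).1.1, (f i).1.2) +
          w.edges.count s((f i).2.1, (f i).2.2) = 0 ∨
        w.edges.count s((f i).1.1, (f i).1.2) +
          w.edges.count s((f i).2.1, (f i).2.2) = 2) ∧
    (∀ i j : Fin r, i ≠ j →
      s((f i).1.1, (f i).1.2) ≠ s((f j).1.1, (f j).1.2) ∧
      s((f i).1.1, (f i).1.2) ≠ s((f j).2.1, (f j).2.2) ∧
      s((f i).2.1, (f i).2.2) ≠ s((f j).1.1, (f j).1.2) ∧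
      s((f i).2.1, (f i).2.2) ≠ s((f j).2.1, (f j).2.2)) := by
  classical
  set H : Fin r → Subgroup (Equiv.Perm Ω) :=
    fun i => Subgroup.closure (ρ '' {j | j ≠ i}) with hH
  set P : Fin r → Sym2 Ω := fun i => s((f i).1.1, (f i).1.2) with hP
  set Q : Fin r → Sym2 Ω := fun i => s((f i).2.1, (f i).2.2) with hQ
  set G : SimpleGraph Ω := SimpleGraph.fromRel (fun x y =>
      ∃ i : Fin r, s(x, y) = s((f i).1.1, (f i).1.2) ∨
        s(x, y) = s((f i).2.1, (f i).2.2)) with hG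
  have hmem : ∀ {i j : Fin r}, j ≠ i → ρ j ∈ H i := fun {i j} hj =>
    Subgroup.subset_closure ⟨j, hj, rfl⟩
  -- each edge of G is a labelled edge
  have hedge : ∀ {x y : Ω}, G.Adj x y → ∃ j, s(x, y) = P j ∨ s(x, y) = Q j := by
    intro x y hxy
    rw [hG, SimpleGraph.fromRel_adj] at hxy
    rcases hxy.2 with ⟨j, h⟩ | ⟨j, h⟩
    · exact ⟨j, h⟩
    · rcases h with h | h
      · exact ⟨j, Or.inl (by rw [Sym2.eq_swap] at h; exact h)⟩
      · exact ⟨j, Or.inr (by rw [Sym2.eq_swap] at h; exact h)⟩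
  -- walks avoiding both i-edges stay within a Γ_i-orbit
  have lemA : ∀ (i : Fin r) {x y : Ω} (w : G.Walk x y),
      P i ∉ w.edges → Q i ∉ w.edges → ∃ g ∈ H i, g x = y := by
    intro i x y w
    induction w with
    | nil => exact fun _ _ => ⟨1, (H i).one_mem, rfl⟩
    | @cons u v z h p ih =>
      intro hPn hQn
      rw [SimpleGraph.Walk.edges_cons, List.mem_cons] at hPn hQn
      push_neg at hPn hQn
      obtain ⟨g, hg, hgxy⟩ := ih hPn.2 hQn.2
      obtain ⟨j, hj⟩ := hedge h
      have hji : j ≠ i := by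
        rintro rfl
        rcases hj with hj | hj
        · exact hPn.1 hj.symm
        · exact hQn.1 hj.symm
      have hstep : ρ j u = v := by
        rcases hj with hj | hj
        · exact tf_step ρ hinv (hf j).1 hj
        · exact tf_step ρ hinv (hf j).2.1 hj
      refine ⟨g * ρ j, (H i).mul_mem hg (hmem hji), ?_⟩
      rw [Equiv.Perm.mul_apply, hstep, hgxy]
  -- walks containing exactly one i-edge cross Γ_i-orbits
  have lemC : ∀ (i : Fin r) {x y : Ω} (w : G.Walk x y),
      w.edges.count (P i) + w.edges.count (Q i) = 1 →
      ∀ g ∈ H i, g x ≠ y := by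
    intro i x y w
    induction w with
    | nil => simp
    | @cons x x' y h p ih =>
      intro hcount
      rw [SimpleGraph.Walk.edges_cons, List.count_cons, List.count_cons] at hcount
      by_cases hcase : s(x, x') = P i ∨ s(x, x') = Q i
      · -- first edge is an i-edge; rest has no i-edges
        have hPQ : P i ≠ Q i := (hf i).2.2.1
        have hno : ∀ g ∈ H i, g x ≠ x' := by
          rcases hcase with hc | hc
          · exact tf_no_cross (hf i).2.2.2.1 hc
          · exact tf_no_cross (hf i).2.2.2.2 hc
        have hzP : p.edges.count (P i) = 0 ∧ p.edges.count (Q i) = 0 := by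
          rcases hcase with hc | hc <;> rw [hc] at hcount <;>
            simp [hPQ, hPQ.symm] at hcount <;> omega
        obtain ⟨g, hg, hgxy⟩ := lemA i p (List.count_eq_zero.1 hzP.1)
          (List.count_eq_zero.1 hzP.2)
        intro h' hh' hhxy
        exact hno (g⁻¹ * h') ((H i).mul_mem ((H i).inv_mem hg) hh')
          (by rw [Equiv.Perm.mul_apply, hhxy, ← hgxy]; simp)
      · -- first edge is a j-edge with j ≠ i
        push_neg at hcase
        obtain ⟨j, hj⟩ := hedge h
        have hji : j ≠ i := by
          rintro rfl
          rcases hj with hj | hj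
          · exact hcase.1 hj
          · exact hcase.2 hj
        have hstep : ρ j x = x' := by
          rcases hj with hj | hj
          · exact tf_step ρ hinv (hf j).1 hj
          · exact tf_step ρ hinv (hf j).2.1 hj
        have hcount' : p.edges.count (P i) + p.edges.count (Q i) = 1 := by
          simp [hcase.1, hcase.2] at hcount; omega
        have hstep' : ρ j x' = x := by
          have h1 : (ρ j * ρ j) x = x := by rw [hinv j]; rfl
          simpa [Equiv.Perm.mul_apply, hstep] using h1
        intro g hg hgxy
        exact ih hcount' (g * ρ j) ((H i).mul_mem hg (hmem hji))
          (by rw [Equiv.Perm.mul_apply, hstep', hgxy])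
  constructor
  · intro v w hw i
    show w.edges.count (P i) + w.edges.count (Q i) = 0 ∨
      w.edges.count (P i) + w.edges.count (Q i) = 2
    have hnodup := hw.edges_nodup
    have h1 : w.edges.count (P i) ≤ 1 := List.nodup_iff_count_le_one.1 hnodup _
    have h2 : w.edges.count (Q i) ≤ 1 := List.nodup_iff_count_le_one.1 hnodup _
    have hne1 : w.edges.count (P i) + w.edges.count (Q i) ≠ 1 := fun hc =>
      lemC i w hc 1 (H i).one_mem rfl
    omega
  · intro i j hij
    have hρi : ρ i ∈ H j := hmem (Ne.symm (Ne.symm hij))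
    refine ⟨?_, ?_, ?_, ?_⟩ <;> intro heq
    · exact (hf j).2.2.2.1 (ρ i) (hmem hij) (tf_step ρ hinv (hf i).1 heq.symm)
    · exact (hf j).2.2.2.2 (ρ i) (hmem hij) (tf_step ρ hinv (hf i).1 heq.symm)
    · exact (hf j).2.2.2.1 (ρ i) (hmem hij) (tf_step ρ hinv (hf i).2.1 heq.symm)
    · exact (hf j).2.2.2.2 (ρ i) (hmem hij) (tf_step ρ hinv (hf i).2.1 heq.symm)
end

section
/- Let Γ = ⟨α₀,…,α_{d−1}⟩ be a transitive permutation group on {1,…,n} with n ≥ 5, and define α_d = (i, n+1)(n+2, n+3) for some i ∈ {1,…,n}, and α_{d+1} = (n+1, n+2)(n+3, n+4). Then Γ* = ⟨α₀,…,α_{d+1}⟩ acting on {1,…,n+4} is isomorphic to S_{n+4} if it contains an odd permutation, and to A_{n+4} otherwise. -/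
open Equiv Equiv.Perm

variable {β : Type*} [DecidableEq β]

def c3 (a b c : β) : Equiv.Perm β := Equiv.swap a c * Equiv.swap a b

section
variable {a b c x y z : β}

lemma c3_apply_left (h1 : a ≠ b) (h2 : b ≠ c) (h3 : c ≠ a) : c3 a b c a = b := by
  simp [c3, Equiv.swap_apply_left, Equiv.swap_apply_of_ne_of_ne (Ne.symm h1) h2]

lemma c3_apply_mid (h1 : a ≠ b) (h2 : b ≠ c) (h3 : c ≠ a) : c3 a b c b = c := by
  simp [c3, Equiv.swap_apply_right, Equiv.swap_apply_left]

lemma c3_apply_right (h1 : a ≠ b) (h2 : b ≠ c) (h3 : c ≠ a) : c3 a b c c = a := by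
  simp [c3, Equiv.swap_apply_of_ne_of_ne h3 (Ne.symm h2), Equiv.swap_apply_right]

lemma c3_apply_other (h1 : x ≠ a) (h2 : x ≠ b) (h3 : x ≠ c) : c3 a b c x = x := by
  simp [c3, Equiv.swap_apply_of_ne_of_ne h1 h2, Equiv.swap_apply_of_ne_of_ne h1 h3]

lemma c3_rot (h1 : a ≠ b) (h2 : b ≠ c) (h3 : c ≠ a) : c3 a b c = c3 b c a := by
  ext w
  rcases eq_or_ne w a with rfl | ha
  · rw [c3_apply_left h1 h2 h3, c3_apply_right h2 h3 h1]
  rcases eq_or_ne w b with rfl | hb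
  · rw [c3_apply_mid h1 h2 h3, c3_apply_left h2 h3 h1]
  rcases eq_or_ne w c with rfl | hc
  · rw [c3_apply_right h1 h2 h3, c3_apply_mid h2 h3 h1]
  · rw [c3_apply_other ha hb hc, c3_apply_other hb hc ha]

lemma c3_inv (h1 : a ≠ b) (h2 : b ≠ c) (h3 : c ≠ a) : (c3 a b c)⁻¹ = c3 a c b := by
  rw [inv_eq_iff_mul_eq_one]
  ext w
  rcases eq_or_ne w a with rfl | ha
  · rw [Equiv.Perm.mul_apply, c3_apply_left (Ne.symm h3) (Ne.symm h2) (Ne.symm h1),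
      c3_apply_right h1 h2 h3, Equiv.Perm.one_apply]
  rcases eq_or_ne w b with rfl | hb
  · rw [Equiv.Perm.mul_apply, c3_apply_right (Ne.symm h3) (Ne.symm h2) (Ne.symm h1),
      c3_apply_left h1 h2 h3, Equiv.Perm.one_apply]
  rcases eq_or_ne w c with rfl | hc
  · rw [Equiv.Perm.mul_apply, c3_apply_mid (Ne.symm h3) (Ne.symm h2) (Ne.symm h1),
      c3_apply_mid h1 h2 h3, Equiv.Perm.one_apply]
  · rw [Equiv.Perm.mul_apply, c3_apply_other ha hc hb, c3_apply_other ha hb hc,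
      Equiv.Perm.one_apply]

lemma c3_conj (σ : Equiv.Perm β) (a b c : β) :
    σ * c3 a b c * σ⁻¹ = c3 (σ a) (σ b) (σ c) := by
  unfold c3
  rw [Equiv.swap_apply_apply σ a c, Equiv.swap_apply_apply σ a b]
  group
end

section
variable {a b x y z : β}

lemma c3_P1 (hab : a ≠ b) (hax : a ≠ x) (hay : a ≠ y) (hbx : b ≠ x) (hby : b ≠ y)
    (hxy : x ≠ y) : c3 a b x * c3 a b y = Equiv.swap a x * Equiv.swap b y := by
  ext w
  rcases eq_or_ne w a with h | ha
  · rw [h, Equiv.Perm.mul_apply, Equiv.Perm.mul_apply,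
      c3_apply_left hab hby (Ne.symm hay), c3_apply_mid hab hbx (Ne.symm hax),
      Equiv.swap_apply_of_ne_of_ne hab hay, Equiv.swap_apply_left]
  rcases eq_or_ne w b with h | hb
  · rw [h, Equiv.Perm.mul_apply, Equiv.Perm.mul_apply,
      c3_apply_mid hab hby (Ne.symm hay),
      c3_apply_other (Ne.symm hay) (Ne.symm hby) (Ne.symm hxy),
      Equiv.swap_apply_left, Equiv.swap_apply_of_ne_of_ne (Ne.symm hay) (Ne.symm hxy)]
  rcases eq_or_ne w x with h | hx
  · rw [h, Equiv.Perm.mul_apply, Equiv.Perm.mul_apply,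
      c3_apply_other (Ne.symm hax) (Ne.symm hbx) hxy,
      c3_apply_right hab hbx (Ne.symm hax),
      Equiv.swap_apply_of_ne_of_ne (Ne.symm hbx) hxy, Equiv.swap_apply_right]
  rcases eq_or_ne w y with h | hy
  · rw [h, Equiv.Perm.mul_apply, Equiv.Perm.mul_apply,
      c3_apply_right hab hby (Ne.symm hay), c3_apply_left hab hbx (Ne.symm hax),
      Equiv.swap_apply_right, Equiv.swap_apply_of_ne_of_ne (Ne.symm hab) hbx]
  · rw [Equiv.Perm.mul_apply, Equiv.Perm.mul_apply,
      c3_apply_other ha hb hy, c3_apply_other ha hb hx,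
      Equiv.swap_apply_of_ne_of_ne hb hy, Equiv.swap_apply_of_ne_of_ne ha hx]

lemma c3_K2 (hax : a ≠ x) (hay : a ≠ y) (haz : a ≠ z)
    (hxy : x ≠ y) (hyz : y ≠ z) (hzx : z ≠ x) :
    c3 a x y * c3 a y z = c3 x y z := by
  ext w
  rcases eq_or_ne w a with h | ha
  · rw [h, Equiv.Perm.mul_apply, c3_apply_left hay hyz (Ne.symm haz),
      c3_apply_right hax hxy (Ne.symm hay), c3_apply_other hax hay haz]
  rcases eq_or_ne w x with h | hx
  · rw [h, Equiv.Perm.mul_apply, c3_apply_other (Ne.symm hax) hxy (Ne.symm hzx),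
      c3_apply_mid hax hxy (Ne.symm hay), c3_apply_left hxy hyz hzx]
  rcases eq_or_ne w y with h | hy
  · rw [h, Equiv.Perm.mul_apply, c3_apply_mid hay hyz (Ne.symm haz),
      c3_apply_other (Ne.symm haz) hzx (Ne.symm hyz), c3_apply_mid hxy hyz hzx]
  rcases eq_or_ne w z with h | hz
  · rw [h, Equiv.Perm.mul_apply, c3_apply_right hay hyz (Ne.symm haz),
      c3_apply_left hax hxy (Ne.symm hay), c3_apply_right hxy hyz hzx]
  · rw [Equiv.Perm.mul_apply, c3_apply_other ha hy hz, c3_apply_other ha hx hy,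
      c3_apply_other hx hy hz]

lemma swap_sandwich (hba : b ≠ a) (hbz : b ≠ z) (hya : y ≠ a) (hyz : y ≠ z) :
    Equiv.swap b y * Equiv.swap a z * Equiv.swap b y = Equiv.swap a z := by
  have := Equiv.swap_apply_apply (Equiv.swap b y) a z
  rw [Equiv.swap_apply_of_ne_of_ne (Ne.symm hba) (Ne.symm hya),
    Equiv.swap_apply_of_ne_of_ne (Ne.symm hbz) (Ne.symm hyz), Equiv.swap_inv] at this
  rw [← this]

lemma c3_K1 (hab : a ≠ b) (hax : a ≠ x) (hay : a ≠ y) (haz : a ≠ z)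
    (hbx : b ≠ x) (hby : b ≠ y) (hbz : b ≠ z)
    (hxy : x ≠ y) (hyz : y ≠ z) (hzx : z ≠ x) :
    c3 a b x * c3 a b y * (c3 a b z * c3 a b y) = c3 a z x := by
  rw [c3_P1 hab hax hay hbx hby hxy, c3_P1 hab haz hay hbz hby (Ne.symm hyz)]
  have : Equiv.swap a x * Equiv.swap b y * (Equiv.swap a z * Equiv.swap b y)
      = Equiv.swap a x * (Equiv.swap b y * Equiv.swap a z * Equiv.swap b y) := by group
  rw [this, swap_sandwich (Ne.symm hab) hbz (Ne.symm hay) hyz]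
  rfl
end

lemma gen3 {H : Subgroup (Equiv.Perm β)} {a b : β} {S : Set β}
    (hab : a ≠ b) (haS : a ∉ S) (hbS : b ∉ S)
    (hbig : ∀ u v : β, ∃ y ∈ S, y ≠ u ∧ y ≠ v)
    (hmem : ∀ x ∈ S, c3 a b x ∈ H) :
    ∀ x y z : β, x ≠ y → y ≠ z → z ≠ x →
      (x = a ∨ x = b ∨ x ∈ S) → (y = a ∨ y = b ∨ y ∈ S) → (z = a ∨ z = b ∨ z ∈ S) →
      c3 x y z ∈ H := by
  have hneA : ∀ {w}, w ∈ S → w ≠ a := fun hw h => haS (h ▸ hw)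
  have hneB : ∀ {w}, w ∈ S → w ≠ b := fun hw h => hbS (h ▸ hw)
  have hrot : ∀ {x y z : β}, x ≠ y → y ≠ z → z ≠ x → c3 x y z ∈ H → c3 y z x ∈ H := by
    intro x y z h1 h2 h3 hm
    rwa [← c3_rot h1 h2 h3]
  have hinv : ∀ x ∈ S, c3 a x b ∈ H := by
    intro x hx
    have : (c3 a b x)⁻¹ = c3 a x b := c3_inv hab (Ne.symm (hneB hx)) (hneA hx)
    exact this ▸ inv_mem (hmem x hx)
  have hmem' : ∀ x ∈ S, c3 b a x ∈ H := by
    intro x hx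
    exact hrot (hneB hx) (Ne.symm hab) (Ne.symm (hneA hx))
      (hrot (Ne.symm (hneA hx)) (hneB hx) (Ne.symm hab) (hinv x hx))
  have hazx : ∀ z ∈ S, ∀ x ∈ S, z ≠ x → c3 a z x ∈ H := by
    intro z hz x hx hzx
    obtain ⟨y, hy, hyx, hyz⟩ := hbig x z
    rw [← c3_K1 hab (Ne.symm (hneA hx)) (Ne.symm (hneA hy)) (Ne.symm (hneA hz))
      (Ne.symm (hneB hx)) (Ne.symm (hneB hy)) (Ne.symm (hneB hz))
      (Ne.symm hyx) hyz hzx]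
    exact mul_mem (mul_mem (hmem x hx) (hmem y hy)) (mul_mem (hmem z hz) (hmem y hy))
  have hbzx : ∀ z ∈ S, ∀ x ∈ S, z ≠ x → c3 b z x ∈ H := by
    intro z hz x hx hzx
    obtain ⟨y, hy, hyx, hyz⟩ := hbig x z
    rw [← c3_K1 (Ne.symm hab) (Ne.symm (hneB hx)) (Ne.symm (hneB hy)) (Ne.symm (hneB hz))
      (Ne.symm (hneA hx)) (Ne.symm (hneA hy)) (Ne.symm (hneA hz))
      (Ne.symm hyx) hyz hzx]
    exact mul_mem (mul_mem (hmem' x hx) (hmem' y hy)) (mul_mem (hmem' z hz) (hmem' y hy))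
  intro x y z hxy hyz hzx hx hy hz
  rcases hx with hx | hx | hx
  · rcases hy with hy | hy | hy
    · exact absurd (hx.trans hy.symm) hxy
    · rcases hz with hz | hz | hz
      · exact absurd (hz.trans hx.symm) hzx
      · exact absurd (hy.trans hz.symm) hyz
      · rw [hx, hy]; exact hmem z hz
    · rcases hz with hz | hz | hz
      · exact absurd (hz.trans hx.symm) hzx
      · rw [hx, hz]; exact hinv y hy
      · rw [hx]; exact hazx y hy z hz hyz
  · rcases hy with hy | hy | hy
    · rcases hz with hz | hz | hz
      · exact absurd (hy.trans hz.symm) hyz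
      · exact absurd (hz.trans hx.symm) hzx
      · rw [hx, hy]; exact hmem' z hz
    · exact absurd (hx.trans hy.symm) hxy
    · rcases hz with hz | hz | hz
      · rw [hx, hz]
        exact hrot hab (Ne.symm (hneB hy)) (hneA hy) (hmem y hy)
      · exact absurd (hz.trans hx.symm) hzx
      · rw [hx]; exact hbzx y hy z hz hyz
  · rcases hy with hy | hy | hy
    · rcases hz with hz | hz | hz
      · exact absurd (hy.trans hz.symm) hyz
      · rw [hy, hz]
        exact hrot (Ne.symm (hneB hx)) (hneA hx) hab
          (hrot hab (Ne.symm (hneB hx)) (hneA hx) (hmem x hx))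
      · rw [hy]
        have hzx' : z ≠ x := hzx
        exact hrot hzx' (hneA hx) (Ne.symm (hneA hz))
          (hrot (Ne.symm (hneA hz)) hzx' (hneA hx) (hazx z hz x hx hzx'))
    · rcases hz with hz | hz | hz
      · rw [hy, hz]
        exact hrot (Ne.symm (hneA hx)) (hneB hx) (Ne.symm hab) (hinv x hx)
      · exact absurd (hy.trans hz.symm) hyz
      · rw [hy]
        exact hrot hzx (hneB hx) (Ne.symm (hneB hz))
          (hrot (Ne.symm (hneB hz)) hzx (hneB hx) (hbzx z hz x hx hzx))
    · rcases hz with hz | hz | hz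
      · rw [hz]
        exact hrot (Ne.symm (hneA hx)) hxy (hneA hy) (hazx x hx y hy hxy)
      · rw [hz]
        exact hrot (Ne.symm (hneB hx)) hxy (hneB hy) (hbzx x hx y hy hxy)
      · rw [← c3_K2 (Ne.symm (hneA hx)) (Ne.symm (hneA hy)) (Ne.symm (hneA hz)) hxy hyz hzx]
        exact mul_mem (hazx x hx y hy hxy) (hazx y hy z hz hyz)

section
variable {i j q1 q2 q3 q4 : β} (g : Equiv.Perm β)

lemma s_eq
    (hij : i ≠ j) (hiq1 : i ≠ q1) (hiq2 : i ≠ q2) (hiq3 : i ≠ q3) (hiq4 : i ≠ q4)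
    (hjq1 : j ≠ q1) (hjq2 : j ≠ q2) (hjq3 : j ≠ q3) (hjq4 : j ≠ q4)
    (h12 : q1 ≠ q2) (h13 : q1 ≠ q3) (h14 : q1 ≠ q4)
    (h23 : q2 ≠ q3) (h24 : q2 ≠ q4) (h34 : q3 ≠ q4)
    (hgi : g i = j) (hg1 : g q1 = q1) (hg2 : g q2 = q2) (hg3 : g q3 = q3) (hg4 : g q4 = q4) :
    (g * (Equiv.swap i q1 * Equiv.swap q2 q3 * (Equiv.swap q1 q2 * Equiv.swap q3 q4)) * g⁻¹)⁻¹ *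
      (Equiv.swap i q1 * Equiv.swap q2 q3 * (Equiv.swap q1 q2 * Equiv.swap q3 q4)) =
      c3 i j q2 := by
  set T : Equiv.Perm β := Equiv.swap i q1 * Equiv.swap q2 q3 * (Equiv.swap q1 q2 * Equiv.swap q3 q4)
    with hT
  have ht1 : T i = q1 := by
    rw [hT]
    simp only [Equiv.Perm.mul_apply]
    rw [Equiv.swap_apply_of_ne_of_ne hiq3 hiq4, Equiv.swap_apply_of_ne_of_ne hiq1 hiq2,
      Equiv.swap_apply_of_ne_of_ne hiq2 hiq3, Equiv.swap_apply_left]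
  have ht2 : T q1 = q3 := by
    rw [hT]
    simp only [Equiv.Perm.mul_apply]
    rw [Equiv.swap_apply_of_ne_of_ne h13 h14, Equiv.swap_apply_left, Equiv.swap_apply_left,
      Equiv.swap_apply_of_ne_of_ne (Ne.symm hiq3) (Ne.symm h13)]
  have ht3 : T q2 = i := by
    rw [hT]
    simp only [Equiv.Perm.mul_apply]
    rw [Equiv.swap_apply_of_ne_of_ne h23 h24, Equiv.swap_apply_right,
      Equiv.swap_apply_of_ne_of_ne h12 h13, Equiv.swap_apply_right]
  have ht4 : T q3 = q4 := by
    rw [hT]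
    simp only [Equiv.Perm.mul_apply]
    rw [Equiv.swap_apply_left, Equiv.swap_apply_of_ne_of_ne (Ne.symm h14) (Ne.symm h24),
      Equiv.swap_apply_of_ne_of_ne (Ne.symm h24) (Ne.symm h34),
      Equiv.swap_apply_of_ne_of_ne (Ne.symm hiq4) (Ne.symm h14)]
  have ht5 : T q4 = q2 := by
    rw [hT]
    simp only [Equiv.Perm.mul_apply]
    rw [Equiv.swap_apply_right, Equiv.swap_apply_of_ne_of_ne (Ne.symm h13) (Ne.symm h23),
      Equiv.swap_apply_right, Equiv.swap_apply_of_ne_of_ne (Ne.symm hiq2) (Ne.symm h12)]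
  have ht0 : ∀ x : β, x ≠ i → x ≠ q1 → x ≠ q2 → x ≠ q3 → x ≠ q4 → T x = x := by
    intro x hxi hx1 hx2 hx3 hx4
    rw [hT]
    simp only [Equiv.Perm.mul_apply]
    rw [Equiv.swap_apply_of_ne_of_ne hx3 hx4, Equiv.swap_apply_of_ne_of_ne hx1 hx2,
      Equiv.swap_apply_of_ne_of_ne hx2 hx3, Equiv.swap_apply_of_ne_of_ne hxi hx1]
  have hTinv : ∀ {x y : β}, T x = y → T⁻¹ y = x := by
    intro x y h
    rw [← h, Equiv.Perm.coe_inv, Equiv.symm_apply_apply]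
  have hgne : ∀ {x y w : β}, g y = w → x ≠ w → g⁻¹ x ≠ y := by
    intro x y w hgy hxw h
    exact hxw (by rw [← hgy, ← h, Equiv.Perm.coe_inv, Equiv.apply_symm_apply])
  have hginv : ∀ {x y : β}, g x = y → g⁻¹ y = x := by
    intro x y h
    rw [← h, Equiv.Perm.coe_inv, Equiv.symm_apply_apply]
  have hL : (g * T * g⁻¹)⁻¹ * T = g * (T⁻¹ * (g⁻¹ * T)) := by
    simp [mul_assoc]
  rw [hL]
  ext x
  simp only [Equiv.Perm.mul_apply]
  rcases eq_or_ne x i with h | hxi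
  · rw [h, ht1, hginv hg1, hTinv ht1, hgi, c3_apply_left hij hjq2 (Ne.symm hiq2)]
  rcases eq_or_ne x j with h | hxj
  · rw [h, ht0 j (Ne.symm hij) hjq1 hjq2 hjq3 hjq4, hginv hgi, hTinv ht3, hg2,
      c3_apply_mid hij hjq2 (Ne.symm hiq2)]
  rcases eq_or_ne x q1 with h | hx1
  · rw [h, ht2, hginv hg3, hTinv ht2, hg1,
      c3_apply_other (Ne.symm hiq1) (Ne.symm hjq1) h12]
  rcases eq_or_ne x q2 with h | hx2
  · have hu1 : g⁻¹ i ≠ i := hgne hgi hij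
    have hu2 : g⁻¹ i ≠ q1 := hgne hg1 hiq1
    have hu3 : g⁻¹ i ≠ q2 := hgne hg2 hiq2
    have hu4 : g⁻¹ i ≠ q3 := hgne hg3 hiq3
    have hu5 : g⁻¹ i ≠ q4 := hgne hg4 hiq4
    rw [h, ht3, hTinv (ht0 _ hu1 hu2 hu3 hu4 hu5), Equiv.Perm.coe_inv, Equiv.apply_symm_apply,
      c3_apply_right hij hjq2 (Ne.symm hiq2)]
  rcases eq_or_ne x q3 with h | hx3
  · rw [h, ht4, hginv hg4, hTinv ht4, hg3,
      c3_apply_other (Ne.symm hiq3) (Ne.symm hjq3) (Ne.symm h23)]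
  rcases eq_or_ne x q4 with h | hx4
  · rw [h, ht5, hginv hg2, hTinv ht5, hg4,
      c3_apply_other (Ne.symm hiq4) (Ne.symm hjq4) (Ne.symm h24)]
  · have hv1 : g⁻¹ x ≠ i := hgne hgi hxj
    have hv2 : g⁻¹ x ≠ q1 := hgne hg1 hx1
    have hv3 : g⁻¹ x ≠ q2 := hgne hg2 hx2
    have hv4 : g⁻¹ x ≠ q3 := hgne hg3 hx3
    have hv5 : g⁻¹ x ≠ q4 := hgne hg4 hx4
    rw [ht0 x hxi hx1 hx2 hx3 hx4, hTinv (ht0 _ hv1 hv2 hv3 hv4 hv5),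
      Equiv.Perm.coe_inv, Equiv.apply_symm_apply, c3_apply_other hxi hxj hx2]
end

lemma isThreeCycle_exists_c3 [Fintype β] {σ : Equiv.Perm β} (h : σ.IsThreeCycle) :
    ∃ x y z : β, x ≠ y ∧ y ≠ z ∧ z ≠ x ∧ σ = c3 x y z := by
  have hcard := h.card_support
  obtain ⟨x, hx⟩ : σ.support.Nonempty := Finset.card_pos.mp (by omega)
  have hx' : σ x ≠ x := Equiv.Perm.mem_support.mp hx
  have hy : σ x ∈ σ.support := Equiv.Perm.apply_mem_support.mpr hx
  have hy' : σ (σ x) ≠ σ x := Equiv.Perm.mem_support.mp hy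
  have hz : σ (σ x) ∈ σ.support := Equiv.Perm.apply_mem_support.mpr hy
  have h3 : σ ^ 3 = 1 := by
    rw [← h.orderOf]; exact pow_orderOf_eq_one σ
  have e3 : σ (σ (σ x)) = x := by
    have : (σ ^ 3) x = x := by rw [h3]; rfl
    calc σ (σ (σ x)) = (σ ^ 3) x := by
          rw [pow_succ, pow_succ, pow_one]
          simp [Equiv.Perm.mul_apply]
      _ = x := this
  have hzx : σ (σ x) ≠ x := by
    intro hzxeq
    exact hx' ((congrArg σ hzxeq).symm.trans e3)
  have hsubset : ({x, σ x, σ (σ x)} : Finset β) ⊆ σ.support := by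
    intro w hw
    simp only [Finset.mem_insert, Finset.mem_singleton] at hw
    rcases hw with rfl | rfl | rfl
    · exact hx
    · exact hy
    · exact hz
  have hc3 : ({x, σ x, σ (σ x)} : Finset β).card = 3 := by
    rw [Finset.card_insert_of_notMem, Finset.card_insert_of_notMem, Finset.card_singleton] <;>
      simp [Ne.symm hx', Ne.symm hzx, Ne.symm hy']
  have hEq : ({x, σ x, σ (σ x)} : Finset β) = σ.support :=
    Finset.eq_of_subset_of_card_le hsubset (by omega)
  refine ⟨x, σ x, σ (σ x), Ne.symm hx', Ne.symm hy', hzx, ?_⟩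
  ext w
  rcases eq_or_ne w x with hw | hwx
  · rw [hw, c3_apply_left (Ne.symm hx') (Ne.symm hy') hzx]
  rcases eq_or_ne w (σ x) with hw | hwy
  · rw [hw, c3_apply_mid (Ne.symm hx') (Ne.symm hy') hzx]
  rcases eq_or_ne w (σ (σ x)) with hw | hwz
  · rw [hw, e3, c3_apply_right (Ne.symm hx') (Ne.symm hy') hzx]
  · have hwsupp : w ∉ σ.support := by
      rw [← hEq]
      simp [hwx, hwy, hwz]
    rw [Equiv.Perm.notMem_support.mp hwsupp, c3_apply_other hwx hwy hwz]

lemma pick {n : ℕ} (hn : 5 ≤ n) (a b c d : ℕ) :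
    ∃ m, m < n ∧ m ≠ a ∧ m ≠ b ∧ m ≠ c ∧ m ≠ d := by
  by_cases h0 : 0 = a ∨ 0 = b ∨ 0 = c ∨ 0 = d
  · by_cases h1 : 1 = a ∨ 1 = b ∨ 1 = c ∨ 1 = d
    · by_cases h2 : 2 = a ∨ 2 = b ∨ 2 = c ∨ 2 = d
      · by_cases h3 : 3 = a ∨ 3 = b ∨ 3 = c ∨ 3 = d
        · exact ⟨4, by omega, by omega, by omega, by omega, by omega⟩
        · exact ⟨3, by omega, by omega, by omega, by omega, by omega⟩
      · exact ⟨2, by omega, by omega, by omega, by omega, by omega⟩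
    · exact ⟨1, by omega, by omega, by omega, by omega, by omega⟩
  · exact ⟨0, by omega, by omega, by omega, by omega, by omega⟩

/-- Extending a transitive group on `n ≥ 5` points by the two permutations
`(i, n+1)(n+2, n+3)` and `(n+1, n+2)(n+3, n+4)` yields `S_{n+4}` if the
resulting group contains an odd permutation, and `A_{n+4}` otherwise. -/
theorem extended_group_is_sym_or_alt
    {n d : ℕ} (hn : 5 ≤ n) (α : Fin d → Equiv.Perm (Fin (n + 4)))
    (hfix : ∀ j : Fin d, ∀ x : Fin (n + 4), n ≤ (x : ℕ) → α j x = x)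
    (htrans : ∀ a b : Fin (n + 4), (a : ℕ) < n → (b : ℕ) < n →
      ∃ g ∈ Subgroup.closure (Set.range α), g a = b)
    (i : Fin (n + 4)) (hi : (i : ℕ) < n) :
    let p1 : Fin (n + 4) := ⟨n, by omega⟩
    let p2 : Fin (n + 4) := ⟨n + 1, by omega⟩
    let p3 : Fin (n + 4) := ⟨n + 2, by omega⟩
    let p4 : Fin (n + 4) := ⟨n + 3, by omega⟩
    let αd : Equiv.Perm (Fin (n + 4)) := Equiv.swap i p1 * Equiv.swap p2 p3
    let αd1 : Equiv.Perm (Fin (n + 4)) := Equiv.swap p1 p2 * Equiv.swap p3 p4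
    let Γstar : Subgroup (Equiv.Perm (Fin (n + 4))) :=
      Subgroup.closure (Set.range α ∪ {αd, αd1})
    ((∃ g ∈ Γstar, Equiv.Perm.sign g = -1) → Γstar = ⊤) ∧
    ((∀ g ∈ Γstar, Equiv.Perm.sign g = 1) → Γstar = alternatingGroup (Fin (n + 4))) := by
  intro p1 p2 p3 p4 αd αd1 Γstar
  have hip1 : i ≠ p1 := Fin.ne_of_val_ne (by omega : (i : ℕ) ≠ n)
  have hip2 : i ≠ p2 := Fin.ne_of_val_ne (by omega : (i : ℕ) ≠ n + 1)
  have hip3 : i ≠ p3 := Fin.ne_of_val_ne (by omega : (i : ℕ) ≠ n + 2)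
  have hip4 : i ≠ p4 := Fin.ne_of_val_ne (by omega : (i : ℕ) ≠ n + 3)
  have h12 : p1 ≠ p2 := Fin.ne_of_val_ne (by omega : n ≠ n + 1)
  have h13 : p1 ≠ p3 := Fin.ne_of_val_ne (by omega : n ≠ n + 2)
  have h14 : p1 ≠ p4 := Fin.ne_of_val_ne (by omega : n ≠ n + 3)
  have h23 : p2 ≠ p3 := Fin.ne_of_val_ne (by omega : n + 1 ≠ n + 2)
  have h24 : p2 ≠ p4 := Fin.ne_of_val_ne (by omega : n + 1 ≠ n + 3)
  have h34 : p3 ≠ p4 := Fin.ne_of_val_ne (by omega : n + 2 ≠ n + 3)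
  have hαd : αd ∈ Γstar :=
    Subgroup.subset_closure (Set.mem_union_right _ (Set.mem_insert _ _))
  have hαd1 : αd1 ∈ Γstar :=
    Subgroup.subset_closure (Set.mem_union_right _ (Set.mem_insert_of_mem _ rfl))
  have hGle : Subgroup.closure (Set.range α) ≤ Γstar :=
    Subgroup.closure_mono Set.subset_union_left
  have hGfix : ∀ g ∈ Subgroup.closure (Set.range α), ∀ x : Fin (n + 4), n ≤ (x : ℕ) → g x = x := by
    intro g hg
    refine Subgroup.closure_induction ?_ ?_ ?_ ?_ hg
    · rintro f ⟨j, rfl⟩ x hx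
      exact hfix j x hx
    · intro x hx; rfl
    · intro f f' _ _ ihf ihf' x hx
      rw [Equiv.Perm.mul_apply, ihf' x hx, ihf x hx]
    · intro f _ ihf x hx
      conv_lhs => rw [← ihf x hx]
      rw [Equiv.Perm.coe_inv, Equiv.symm_apply_apply]
  have hconj : ∀ σ ∈ Γstar, ∀ a b c : Fin (n + 4),
      c3 a b c ∈ Γstar → c3 (σ a) (σ b) (σ c) ∈ Γstar := by
    intro σ hσ a b c hm
    rw [← c3_conj]
    exact mul_mem (mul_mem hσ hm) (inv_mem hσ)
  -- evaluations of αd and αd1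
  have ed_i : αd i = p1 := by
    show (Equiv.swap i p1 * Equiv.swap p2 p3) i = p1
    rw [Equiv.Perm.mul_apply, Equiv.swap_apply_of_ne_of_ne hip2 hip3, Equiv.swap_apply_left]
  have ed_p1 : αd p1 = i := by
    show (Equiv.swap i p1 * Equiv.swap p2 p3) p1 = i
    rw [Equiv.Perm.mul_apply, Equiv.swap_apply_of_ne_of_ne h12 h13,
      Equiv.swap_apply_right]
  have ed_p2 : αd p2 = p3 := by
    show (Equiv.swap i p1 * Equiv.swap p2 p3) p2 = p3
    rw [Equiv.Perm.mul_apply, Equiv.swap_apply_left,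
      Equiv.swap_apply_of_ne_of_ne (Ne.symm hip3) (Ne.symm h13)]
  have e1_i : αd1 i = i := by
    show (Equiv.swap p1 p2 * Equiv.swap p3 p4) i = i
    rw [Equiv.Perm.mul_apply, Equiv.swap_apply_of_ne_of_ne hip3 hip4,
      Equiv.swap_apply_of_ne_of_ne hip1 hip2]
  have e1_p2 : αd1 p2 = p1 := by
    show (Equiv.swap p1 p2 * Equiv.swap p3 p4) p2 = p1
    rw [Equiv.Perm.mul_apply, Equiv.swap_apply_of_ne_of_ne h23 h24,
      Equiv.swap_apply_right]
  have e1_p3 : αd1 p3 = p4 := by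
    show (Equiv.swap p1 p2 * Equiv.swap p3 p4) p3 = p4
    rw [Equiv.Perm.mul_apply, Equiv.swap_apply_left,
      Equiv.swap_apply_of_ne_of_ne (Ne.symm h14) (Ne.symm h24)]
  have e1_lt : ∀ x : Fin (n + 4), (x : ℕ) < n → αd1 x = x := by
    intro x hx
    have hx1 : x ≠ p1 := Fin.ne_of_val_ne (by omega : (x : ℕ) ≠ n)
    have hx2 : x ≠ p2 := Fin.ne_of_val_ne (by omega : (x : ℕ) ≠ n + 1)
    have hx3 : x ≠ p3 := Fin.ne_of_val_ne (by omega : (x : ℕ) ≠ n + 2)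
    have hx4 : x ≠ p4 := Fin.ne_of_val_ne (by omega : (x : ℕ) ≠ n + 3)
    show (Equiv.swap p1 p2 * Equiv.swap p3 p4) x = x
    rw [Equiv.Perm.mul_apply, Equiv.swap_apply_of_ne_of_ne hx3 hx4,
      Equiv.swap_apply_of_ne_of_ne hx1 hx2]
  -- the basic family of 3-cycles from transitivity
  have hmem0 : ∀ j : Fin (n + 4), (j : ℕ) < n → j ≠ i → c3 i j p2 ∈ Γstar := by
    intro j hj hji
    have hjp1 : j ≠ p1 := Fin.ne_of_val_ne (by omega : (j : ℕ) ≠ n)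
    have hjp2 : j ≠ p2 := Fin.ne_of_val_ne (by omega : (j : ℕ) ≠ n + 1)
    have hjp3 : j ≠ p3 := Fin.ne_of_val_ne (by omega : (j : ℕ) ≠ n + 2)
    have hjp4 : j ≠ p4 := Fin.ne_of_val_ne (by omega : (j : ℕ) ≠ n + 3)
    obtain ⟨g, hgmem, hgi⟩ := htrans i j hi hj
    have hgfix := hGfix g hgmem
    have hT : αd * αd1 ∈ Γstar := mul_mem hαd hαd1
    have hg' : g ∈ Γstar := hGle hgmem
    have hmemb : (g * (αd * αd1) * g⁻¹)⁻¹ * (αd * αd1) ∈ Γstar :=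
      mul_mem (inv_mem (mul_mem (mul_mem hg' hT) (inv_mem hg'))) hT
    have heq : αd * αd1 =
        Equiv.swap i p1 * Equiv.swap p2 p3 * (Equiv.swap p1 p2 * Equiv.swap p3 p4) := rfl
    rw [heq] at hmemb
    rwa [s_eq g (Ne.symm hji) hip1 hip2 hip3 hip4 hjp1 hjp2 hjp3 hjp4 h12 h13 h14 h23 h24 h34
      hgi (hgfix p1 (Nat.le_refl n)) (hgfix p2 (Nat.le_add_right n 1))
      (hgfix p3 (Nat.le_add_right n 2)) (hgfix p4 (Nat.le_add_right n 3))] at hmemb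
  have hmem0' : ∀ j : Fin (n + 4), (j : ℕ) < n → j ≠ i → c3 i p2 j ∈ Γstar := by
    intro j hj hji
    have hjp2 : j ≠ p2 := Fin.ne_of_val_ne (by omega : (j : ℕ) ≠ n + 1)
    have e : (c3 i j p2)⁻¹ = c3 i p2 j := c3_inv (Ne.symm hji) hjp2 (Ne.symm hip2)
    exact e ▸ inv_mem (hmem0 j hj hji)
  -- phase 1 : all 3-cycles supported in {x | x < n} ∪ {p2}
  have hbig1 : ∀ u v : Fin (n + 4), ∃ y ∈ {w : Fin (n + 4) | (w : ℕ) < n ∧ w ≠ i},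
      y ≠ u ∧ y ≠ v := by
    intro u v
    obtain ⟨m, hm, h1, h2, h3, -⟩ := pick hn (i : ℕ) (u : ℕ) (v : ℕ) (v : ℕ)
    refine ⟨⟨m, by omega⟩, ⟨hm, Fin.ne_of_val_ne h1⟩, Fin.ne_of_val_ne h2, Fin.ne_of_val_ne h3⟩
  have hnot : ¬ (n + 1 < n) := by omega
  have gen1 := gen3 (H := Γstar) (a := i) (b := p2)
    (S := {w : Fin (n + 4) | (w : ℕ) < n ∧ w ≠ i}) hip2
    (fun h => h.2 rfl) (fun h => hnot h.1) hbig1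
    (fun x hx => hmem0' x hx.1 hx.2)
  -- two auxiliary small points j k
  obtain ⟨jv, hjvn, hjvi, -, -, -⟩ := pick hn (i : ℕ) (i : ℕ) (i : ℕ) (i : ℕ)
  obtain ⟨kv, hkvn, hkvi, hkvj, -, -⟩ := pick hn (i : ℕ) jv jv jv
  set j : Fin (n + 4) := ⟨jv, by omega⟩ with hjdef
  set k : Fin (n + 4) := ⟨kv, by omega⟩ with hkdef
  have hjlt : (j : ℕ) < n := hjvn
  have hklt : (k : ℕ) < n := hkvn
  have hji : j ≠ i := Fin.ne_of_val_ne hjvi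
  have hki : k ≠ i := Fin.ne_of_val_ne hkvi
  have hkj : k ≠ j := Fin.ne_of_val_ne hkvj
  have hjp1 : j ≠ p1 := Fin.ne_of_val_ne (by omega : (j : ℕ) ≠ n)
  have hjp2 : j ≠ p2 := Fin.ne_of_val_ne (by omega : (j : ℕ) ≠ n + 1)
  have hjp3 : j ≠ p3 := Fin.ne_of_val_ne (by omega : (j : ℕ) ≠ n + 2)
  have hkp1 : k ≠ p1 := Fin.ne_of_val_ne (by omega : (k : ℕ) ≠ n)
  have hkp2 : k ≠ p2 := Fin.ne_of_val_ne (by omega : (k : ℕ) ≠ n + 1)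
  -- the chain producing c3 i p2 p1, c3 i p2 p3, c3 i p2 p4
  have hB : c3 i j p2 ∈ Γstar := hmem0 j hjlt hji
  have hBinv : c3 i p2 j ∈ Γstar := hmem0' j hjlt hji
  have hC : c3 i p1 j ∈ Γstar := by
    have h := hconj αd1 hαd1 i p2 j hBinv
    rwa [e1_i, e1_p2, e1_lt j hjlt] at h
  have hD : c3 p1 j p2 ∈ Γstar := by
    rw [← c3_K2 hip1 (Ne.symm hji) hip2 (Ne.symm hjp1) hjp2 (Ne.symm h12)]
    exact mul_mem hC hB
  have hD' : c3 j p2 p1 ∈ Γstar := by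
    rwa [c3_rot (Ne.symm hjp1) hjp2 (Ne.symm h12)] at hD
  have hE : c3 j i k ∈ Γstar :=
    gen1 j i k hji (Ne.symm hki) hkj (Or.inr (Or.inr ⟨hjlt, hji⟩)) (Or.inl rfl)
      (Or.inr (Or.inr ⟨hklt, hki⟩))
  have hF : c3 i p2 p1 ∈ Γstar := by
    have h := hconj (c3 j i k) hE j p2 p1 hD'
    rwa [c3_apply_left hji (Ne.symm hki) hkj,
      c3_apply_other (Ne.symm hjp2) (Ne.symm hip2) (Ne.symm hkp2),
      c3_apply_other (Ne.symm hjp1) (Ne.symm hip1) (Ne.symm hkp1)] at h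
  have hG : c3 i p1 p3 ∈ Γstar := by
    have h := hconj αd hαd i p2 p1 hF
    rw [ed_i, ed_p2, ed_p1] at h
    rwa [c3_rot hip1 h13 (Ne.symm hip3)]
  have hH : c3 p2 p1 p3 ∈ Γstar := by
    rw [← c3_K2 hip2 hip1 hip3 (Ne.symm h12) h13 (Ne.symm h23)]
    exact mul_mem hF hG
  have hH' : c3 p1 p3 p2 ∈ Γstar := by
    rwa [c3_rot (Ne.symm h12) h13 (Ne.symm h23)] at hH
  have hσ2 : c3 i j p1 ∈ Γstar := by
    have h := inv_mem hC
    rwa [c3_inv hip1 (Ne.symm hjp1) hji] at h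
  have hI : c3 i p3 p2 ∈ Γstar := by
    have h := hconj (c3 i j p1) hσ2 p1 p3 p2 hH'
    rwa [c3_apply_right (Ne.symm hji) hjp1 (Ne.symm hip1),
      c3_apply_other (Ne.symm hip3) (Ne.symm hjp3) (Ne.symm h13),
      c3_apply_other (Ne.symm hip2) (Ne.symm hjp2) (Ne.symm h12)] at h
  have hI' : c3 i p2 p3 ∈ Γstar := by
    have h := inv_mem hI
    rwa [c3_inv hip3 (Ne.symm h23) (Ne.symm hip2)] at h
  have hJ1 : c3 i p4 p1 ∈ Γstar := by
    have h := hconj αd1 hαd1 i p3 p2 hI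
    rwa [e1_i, e1_p3, e1_p2] at h
  have hJ : c3 i p2 p4 ∈ Γstar := by
    have h := hconj (c3 i p2 p1) hF i p4 p1 hJ1
    rw [c3_apply_left hip2 (Ne.symm h12) (Ne.symm hip1),
      c3_apply_other (Ne.symm hip4) (Ne.symm h24) (Ne.symm h14),
      c3_apply_right hip2 (Ne.symm h12) (Ne.symm hip1)] at h
    rwa [c3_rot hip2 h24 (Ne.symm hip4)]
  -- phase 2 : all 3-cycles
  have hbig2 : ∀ u v : Fin (n + 4), ∃ y ∈ {w : Fin (n + 4) | w ≠ i ∧ w ≠ p2},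
      y ≠ u ∧ y ≠ v := by
    intro u v
    obtain ⟨m, hm, h1, h2, h3, -⟩ := pick hn (i : ℕ) (u : ℕ) (v : ℕ) (v : ℕ)
    refine ⟨⟨m, by omega⟩, ⟨Fin.ne_of_val_ne h1, Fin.ne_of_val_ne (by omega : m ≠ n + 1)⟩,
      Fin.ne_of_val_ne h2, Fin.ne_of_val_ne h3⟩
  have hmemS2 : ∀ x ∈ {w : Fin (n + 4) | w ≠ i ∧ w ≠ p2}, c3 i p2 x ∈ Γstar := by
    intro x hx
    rcases Nat.lt_or_ge (x : ℕ) n with hlt | hge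
    · exact hmem0' x hlt hx.1
    · have hx4 : (x : ℕ) < n + 4 := x.isLt
      have : (x : ℕ) = n ∨ (x : ℕ) = n + 1 ∨ (x : ℕ) = n + 2 ∨ (x : ℕ) = n + 3 := by omega
      rcases this with hv | hv | hv | hv
      · have : x = p1 := Fin.ext hv
        rw [this]; exact hF
      · exact absurd (Fin.ext hv : x = p2) hx.2
      · have : x = p3 := Fin.ext hv
        rw [this]; exact hI'
      · have : x = p4 := Fin.ext hv
        rw [this]; exact hJ
  have gen2 := gen3 (H := Γstar) (a := i) (b := p2)
    (S := {w : Fin (n + 4) | w ≠ i ∧ w ≠ p2}) hip2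
    (fun h => h.1 rfl) (fun h => h.2 rfl) hbig2 hmemS2
  have hall : ∀ x y z : Fin (n + 4), x ≠ y → y ≠ z → z ≠ x → c3 x y z ∈ Γstar := by
    intro x y z h1 h2 h3
    have mem : ∀ w : Fin (n + 4), w = i ∨ w = p2 ∨ w ∈ {w : Fin (n + 4) | w ≠ i ∧ w ≠ p2} := by
      intro w
      by_cases hwi : w = i
      · exact Or.inl hwi
      by_cases hwp : w = p2
      · exact Or.inr (Or.inl hwp)
      · exact Or.inr (Or.inr ⟨hwi, hwp⟩)
    exact gen2 x y z h1 h2 h3 (mem x) (mem y) (mem z)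
  have hAle : alternatingGroup (Fin (n + 4)) ≤ Γstar := by
    rw [← Equiv.Perm.closure_three_cycles_eq_alternating]
    refine (Subgroup.closure_le _).mpr ?_
    intro σ hσ
    obtain ⟨x, y, z, h1, h2, h3, rfl⟩ := isThreeCycle_exists_c3 hσ
    exact hall x y z h1 h2 h3
  constructor
  · rintro ⟨g, hg, hsg⟩
    rw [eq_top_iff]
    intro σ _
    rcases Int.units_eq_one_or (Equiv.Perm.sign σ) with h | h
    · exact hAle (Equiv.Perm.mem_alternatingGroup.mpr h)
    · have h1 : σ * g⁻¹ ∈ alternatingGroup (Fin (n + 4)) := by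
        rw [Equiv.Perm.mem_alternatingGroup, map_mul, map_inv, h, hsg]
        decide
      have h2 := mul_mem (hAle h1) hg
      rwa [inv_mul_cancel_right] at h2
  · intro hall'
    refine le_antisymm ?_ hAle
    intro σ hσ
    exact Equiv.Perm.mem_alternatingGroup.mpr (hall' σ hσ)
end

section
/- With the notation of the sesqui-extension: if τ ∉ Φ*, then Φ is a string C-group (with generators α₀,…,α_{d−1}) if and only if Φ* is a string C-group (with generators α_i τ^{η_i}). -/
/-- `β : Fin d → G` is a family of string C-group generators: nontrivial
involutions satisfying the string property and the intersection property. -/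
def IsStringCGroupFamily {G : Type*} [Group G] {d : ℕ} (β : Fin d → G) : Prop :=
  (∀ i, β i * β i = 1 ∧ β i ≠ 1) ∧
  (∀ i j : Fin d, ((i : ℕ) + 1 < (j : ℕ) ∨ (j : ℕ) + 1 < (i : ℕ)) →
    Commute (β i) (β j)) ∧
  (∀ I J : Set (Fin d),
    Subgroup.closure (β '' I) ⊓ Subgroup.closure (β '' J) =
      Subgroup.closure (β '' (I ∩ J)))

section Aux

variable {G : Type*} [Group G] {d : ℕ} {α : Fin d → G} {k : Fin d} {τ : G}

private lemma tau_comm_of_mem (hcomm : ∀ g ∈ Subgroup.closure (Set.range α), Commute τ g)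
    {I : Set (Fin d)} {g : G} (hg : g ∈ Subgroup.closure (α '' I)) : τ * g = g * τ :=
  hcomm g (Subgroup.closure_mono (Set.image_subset_range α I) hg)

/-- Key lemma A : every element of the closure of `β '' I` is of the form
`g` or `g * τ` with `g` in the closure of `α '' I`. -/
private lemma lemA (hτ2 : τ * τ = 1)
    (hcomm : ∀ g ∈ Subgroup.closure (Set.range α), Commute τ g)
    (I : Set (Fin d)) {x : G}
    (hx : x ∈ Subgroup.closure ((fun i => α i * τ ^ (if i = k then 1 else 0)) '' I)) :
    ∃ g ∈ Subgroup.closure (α '' I), x = g ∨ x = g * τ := by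
  have hτinv : τ⁻¹ = τ := by rw [inv_eq_iff_mul_eq_one]; exact hτ2
  induction hx using Subgroup.closure_induction with
  | mem x hxmem =>
      obtain ⟨i, hiI, rfl⟩ := hxmem
      refine ⟨α i, Subgroup.subset_closure ⟨i, hiI, rfl⟩, ?_⟩
      by_cases h : i = k
      · right; simp [h]
      · left; simp [h]
  | one => exact ⟨1, one_mem _, Or.inl rfl⟩
  | mul x y hx hy ihx ihy =>
      obtain ⟨g, hg, hgx⟩ := ihx
      obtain ⟨h, hh, hhy⟩ := ihy
      refine ⟨g * h, mul_mem hg hh, ?_⟩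
      have hc := tau_comm_of_mem hcomm hh
      rcases hgx with heq | heq <;> rcases hhy with heq2 | heq2
      · left; rw [heq, heq2]
      · right; rw [heq, heq2, mul_assoc]
      · right; rw [heq, heq2, mul_assoc, hc, ← mul_assoc]
      · left
        rw [heq, heq2, mul_assoc, ← mul_assoc τ h τ, hc, mul_assoc h τ τ, hτ2, mul_one]
  | inv x hx ihx =>
      obtain ⟨g, hg, hgx⟩ := ihx
      refine ⟨g⁻¹, inv_mem hg, ?_⟩
      have hc := tau_comm_of_mem hcomm (inv_mem hg)
      rcases hgx with heq | heq
      · left; rw [heq]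
      · right; rw [heq, mul_inv_rev, hτinv, hc]

/-- Key lemma B : for every `g` in the closure of `α '' I`, either `g` or
`g * τ` belongs to the closure of `β '' I`. -/
private lemma lemB (hτ2 : τ * τ = 1)
    (hcomm : ∀ g ∈ Subgroup.closure (Set.range α), Commute τ g)
    (I : Set (Fin d)) {g : G} (hg : g ∈ Subgroup.closure (α '' I)) :
    g ∈ Subgroup.closure ((fun i => α i * τ ^ (if i = k then 1 else 0)) '' I) ∨
      g * τ ∈ Subgroup.closure ((fun i => α i * τ ^ (if i = k then 1 else 0)) '' I) := by
  have hτinv : τ⁻¹ = τ := by rw [inv_eq_iff_mul_eq_one]; exact hτ2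
  set B := Subgroup.closure ((fun i => α i * τ ^ (if i = k then 1 else 0)) '' I) with hB
  induction hg using Subgroup.closure_induction with
  | mem x hxmem =>
      obtain ⟨i, hiI, rfl⟩ := hxmem
      by_cases h : i = k
      · right
        have : α i * τ = α i * τ ^ (if i = k then 1 else 0) := by simp [h]
        rw [this]
        exact Subgroup.subset_closure ⟨i, hiI, rfl⟩
      · left
        have : α i = α i * τ ^ (if i = k then 1 else 0) := by simp [h]
        rw [this]
        exact Subgroup.subset_closure ⟨i, hiI, rfl⟩
  | one => exact Or.inl (one_mem _)
  | mul x y hx hy ihx ihy =>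
      have hcy := tau_comm_of_mem hcomm hy
      rcases ihx with hx' | hx' <;> rcases ihy with hy' | hy'
      · exact Or.inl (mul_mem hx' hy')
      · right; rw [mul_assoc]; exact mul_mem hx' hy'
      · right
        have : x * y * τ = (x * τ) * y := by
          rw [mul_assoc x τ y, hcy, ← mul_assoc]
        rw [this]
        exact mul_mem hx' hy'
      · left
        have : x * y = (x * τ) * (y * τ) := by
          symm
          rw [mul_assoc x τ (y * τ), ← mul_assoc τ y τ, hcy, mul_assoc y τ τ, hτ2, mul_one]
        rw [this]
        exact mul_mem hx' hy'
  | inv x hx ihx =>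
      have hcx := tau_comm_of_mem hcomm (inv_mem hx)
      rcases ihx with hx' | hx'
      · exact Or.inl (inv_mem hx')
      · right
        have : x⁻¹ * τ = (x * τ)⁻¹ := by rw [mul_inv_rev, hτinv, hcx]
        rw [this]
        exact inv_mem hx'

end Aux

/-- If `τ` does not belong to the sesqui-extension `Φ*`, then `Φ` is a string
C-group if and only if `Φ*` is. -/
theorem sesqui_extension_stringCGroup_iff
    {G : Type*} [Group G] {d : ℕ} (α : Fin d → G) (k : Fin d) (τ : G)
    (hτ2 : τ * τ = 1) (hτ1 : τ ≠ 1)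
    (hτΦ : τ ∉ Subgroup.closure (Set.range α))
    (hcomm : ∀ g ∈ Subgroup.closure (Set.range α), Commute τ g)
    (hτΦstar : τ ∉ Subgroup.closure
      (Set.range fun i => α i * τ ^ (if i = k then 1 else 0))) :
    IsStringCGroupFamily α ↔
      IsStringCGroupFamily (fun i => α i * τ ^ (if i = k then 1 else 0)) := by
  set β : Fin d → G := fun i => α i * τ ^ (if i = k then 1 else 0) with hβ
  have hτinv : τ⁻¹ = τ := by rw [inv_eq_iff_mul_eq_one]; exact hτ2
  have hαmem : ∀ i, α i ∈ Subgroup.closure (Set.range α) := fun i =>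
    Subgroup.subset_closure ⟨i, rfl⟩
  have hβmem : ∀ i, β i ∈ Subgroup.closure (Set.range β) := fun i =>
    Subgroup.subset_closure ⟨i, rfl⟩
  have hτα : ∀ i, τ * α i = α i * τ := fun i => hcomm (α i) (hαmem i)
  -- β i in terms of α i
  have hβk : β k = α k * τ := by simp [hβ]
  have hβne : ∀ i, i ≠ k → β i = α i := by intro i h; simp [hβ, h]
  -- commuting transfer
  have hpow : ∀ m n : ℕ, τ ^ m * τ ^ n = τ ^ n * τ ^ m := fun m n =>
    ((Commute.refl τ).pow_pow m n).eq
  have key : ∀ i j : Fin d, β i * β j =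
      α i * α j * (τ ^ (if i = k then 1 else 0) * τ ^ (if j = k then 1 else 0)) := by
    intro i j
    have h1 : Commute (τ ^ (if i = k then 1 else 0)) (α j) :=
      ((hcomm (α j) (hαmem j)).pow_left _)
    show α i * τ ^ (if i = k then 1 else 0) * (α j * τ ^ (if j = k then 1 else 0)) =
      α i * α j * (τ ^ (if i = k then 1 else 0) * τ ^ (if j = k then 1 else 0))
    rw [mul_assoc (α i), ← mul_assoc _ (α j), h1.eq, mul_assoc (α j), ← mul_assoc,
      ← mul_assoc]
  have hcommiff : ∀ i j, (Commute (α i) (α j) ↔ Commute (β i) (β j)) := by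
    intro i j
    constructor
    · intro h
      show β i * β j = β j * β i
      rw [key i j, key j i, h.eq, hpow]
    · intro h
      have h' : β i * β j = β j * β i := h.eq
      rw [key i j, key j i] at h'
      have hc : τ ^ (if i = k then 1 else 0) * τ ^ (if j = k then 1 else 0) =
          τ ^ (if j = k then 1 else 0) * τ ^ (if i = k then 1 else 0) := hpow _ _
      rw [← hc] at h'
      exact mul_right_cancel h'
  constructor
  · rintro ⟨hinv, hstr, hint⟩
    refine ⟨?_, ?_, ?_⟩
    · intro i
      constructor
      · show β i * β i = 1
        by_cases h : i = k
        · rw [h, hβk, mul_assoc, ← mul_assoc τ (α k) τ, hτα, mul_assoc (α k) τ τ,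
            hτ2, mul_one, (hinv k).1]
        · rw [hβne i h]; exact (hinv i).1
      · show β i ≠ 1
        by_cases h : i = k
        · rw [h, hβk]
          intro hc
          apply hτΦ
          have : τ = (α k)⁻¹ := by
            rw [eq_inv_iff_mul_eq_one, hτα k]
            exact hc
          rw [this]
          exact inv_mem (hαmem k)
        · rw [hβne i h]; exact (hinv i).2
    · intro i j hij
      exact (hcommiff i j).1 (hstr i j hij)
    · intro I J
      apply le_antisymm
      · rintro x ⟨hxI, hxJ⟩
        obtain ⟨g, hgI, hgx⟩ := lemA hτ2 hcomm I hxI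
        obtain ⟨h, hhJ, hhx⟩ := lemA hτ2 hcomm J hxJ
        -- g = h
        have hgΦ : g ∈ Subgroup.closure (Set.range α) :=
          Subgroup.closure_mono (Set.image_subset_range α I) hgI
        have hhΦ : h ∈ Subgroup.closure (Set.range α) :=
          Subgroup.closure_mono (Set.image_subset_range α J) hhJ
        have hgh : g = h := by
          rcases hgx with heq | heq <;> rcases hhx with heq2 | heq2
          · rw [← heq, ← heq2]
          · exfalso; apply hτΦ
            have : τ = h⁻¹ * g := by rw [← heq, heq2]; group
            rw [this]; exact mul_mem (inv_mem hhΦ) hgΦ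
          · exfalso; apply hτΦ
            have : τ = g⁻¹ * h := by rw [← heq2, heq]; group
            rw [this]; exact mul_mem (inv_mem hgΦ) hhΦ
          · have hgt : g * τ = h * τ := by rw [← heq, ← heq2]
            exact mul_right_cancel hgt
        rw [← hgh] at hhJ
        have hgIJ : g ∈ Subgroup.closure (α '' (I ∩ J)) := by
          rw [← hint I J]; exact ⟨hgI, hhJ⟩
        have hxstar : x ∈ Subgroup.closure (Set.range β) :=
          Subgroup.closure_mono (Set.image_subset_range β I) hxI
        rcases lemB hτ2 hcomm (I ∩ J) hgIJ with hmem | hmem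
        · rcases hgx with heq | heq
          · rw [heq]; exact hmem
          · exfalso; apply hτΦstar
            have hmem' : g ∈ Subgroup.closure (Set.range β) :=
              Subgroup.closure_mono (Set.image_subset_range β (I ∩ J)) hmem
            have : τ = g⁻¹ * x := by rw [heq]; group
            rw [this]
            exact mul_mem (inv_mem hmem') hxstar
        · rcases hgx with heq | heq
          · exfalso; apply hτΦstar
            have hmem' : g * τ ∈ Subgroup.closure (Set.range β) :=
              Subgroup.closure_mono (Set.image_subset_range β (I ∩ J)) hmem
            have : τ = x⁻¹ * (g * τ) := by rw [heq]; group
            rw [this]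
            exact mul_mem (inv_mem hxstar) hmem'
          · rw [heq]; exact hmem
      · exact le_inf
          (Subgroup.closure_mono (Set.image_mono (f := β) Set.inter_subset_left))
          (Subgroup.closure_mono (Set.image_mono (f := β) Set.inter_subset_right))
  · rintro ⟨hinv, hstr, hint⟩
    refine ⟨?_, ?_, ?_⟩
    · intro i
      constructor
      · by_cases h : i = k
        · have h1 := (hinv k).1
          rw [hβk, mul_assoc, ← mul_assoc τ (α k) τ, hτα, mul_assoc (α k) τ τ,
            hτ2, mul_one] at h1
          rw [h]; exact h1
        · have := (hinv i).1; rwa [hβne i h] at this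
      · by_cases h : i = k
        · rw [h]
          intro hc
          apply hτΦstar
          have hbt : β k = τ := by rw [hβk, hc, one_mul]
          rw [← hbt]
          exact hβmem k
        · have := (hinv i).2; rwa [hβne i h] at this
    · intro i j hij
      exact (hcommiff i j).2 (hstr i j hij)
    · intro I J
      apply le_antisymm
      · rintro g ⟨hgI, hgJ⟩
        have hgΦ : g ∈ Subgroup.closure (Set.range α) :=
          Subgroup.closure_mono (Set.image_subset_range α I) hgI
        rcases lemB hτ2 hcomm I hgI with hI | hI <;>
          rcases lemB hτ2 hcomm J hgJ with hJ | hJ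
        · -- g ∈ βI ⊓ βJ
          have hg' : g ∈ Subgroup.closure (β '' (I ∩ J)) := by
            rw [← hint I J]; exact ⟨hI, hJ⟩
          obtain ⟨h, hhIJ, hhx⟩ := lemA hτ2 hcomm (I ∩ J) hg'
          have hhΦ : h ∈ Subgroup.closure (Set.range α) :=
            Subgroup.closure_mono (Set.image_subset_range α (I ∩ J)) hhIJ
          rcases hhx with heq | heq
          · rw [heq]; exact hhIJ
          · exfalso; apply hτΦ
            have : τ = h⁻¹ * g := by rw [heq]; group
            rw [this]; exact mul_mem (inv_mem hhΦ) hgΦ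
        · exfalso; apply hτΦstar
          have hI' : g ∈ Subgroup.closure (Set.range β) :=
            Subgroup.closure_mono (Set.image_subset_range β I) hI
          have hJ' : g * τ ∈ Subgroup.closure (Set.range β) :=
            Subgroup.closure_mono (Set.image_subset_range β J) hJ
          have : τ = g⁻¹ * (g * τ) := by group
          rw [this]; exact mul_mem (inv_mem hI') hJ'
        · exfalso; apply hτΦstar
          have hI' : g * τ ∈ Subgroup.closure (Set.range β) :=
            Subgroup.closure_mono (Set.image_subset_range β I) hI
          have hJ' : g ∈ Subgroup.closure (Set.range β) :=
            Subgroup.closure_mono (Set.image_subset_range β J) hJ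
          have : τ = g⁻¹ * (g * τ) := by group
          rw [this]; exact mul_mem (inv_mem hJ') hI'
        · -- g * τ ∈ βI ⊓ βJ
          have hg' : g * τ ∈ Subgroup.closure (β '' (I ∩ J)) := by
            rw [← hint I J]; exact ⟨hI, hJ⟩
          obtain ⟨h, hhIJ, hhx⟩ := lemA hτ2 hcomm (I ∩ J) hg'
          have hhΦ : h ∈ Subgroup.closure (Set.range α) :=
            Subgroup.closure_mono (Set.image_subset_range α (I ∩ J)) hhIJ
          rcases hhx with heq | heq
          · exfalso; apply hτΦ
            have : τ = g⁻¹ * h := by rw [← heq]; group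
            rw [this]; exact mul_mem (inv_mem hgΦ) hhΦ
          · have hgheq : g = h := mul_right_cancel heq
            rw [hgheq]; exact hhIJ
      · exact le_inf
          (Subgroup.closure_mono (Set.image_mono (f := α) Set.inter_subset_left))
          (Subgroup.closure_mono (Set.image_mono (f := α) Set.inter_subset_right))
end

section
/- Let Γ = ⟨ρ₀,…,ρ_{r−1}⟩ ≅ A_n with n ≥ 12 be a string C-group with each Γ_i intransitive, and suppose for some index i the permutation ρ_i interchanges exactly one pair {a,b} of points lying in different Γ_i-orbits. If A denotes the permutation group induced by Γ_i on the orbit of a, and A is primitive on that orbit, then the set J_A = { j : the action of ρ_j on the orbit of a is nontrivial } is an interval of consecutive integers. -/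
private theorem JA_aux {n r : ℕ} (ρ : Fin r → Equiv.Perm (Fin n))
    (i : Fin r) (a b : Fin n) (hab : ρ i a = b)
    (horb : ∀ g ∈ Subgroup.closure (ρ '' {j | j ≠ i}), g a ≠ b)
    (huniq : ∀ x y : Fin n, ρ i x = y → x ≠ y →
      (∀ g ∈ Subgroup.closure (ρ '' {j | j ≠ i}), g x ≠ y) → s(x, y) = s(a, b))
    (hprim : ∀ B : Set (Fin n),
      B ⊆ {x | ∃ g ∈ Subgroup.closure (ρ '' {j | j ≠ i}), g a = x} →
      (∀ g ∈ Subgroup.closure (ρ '' {j | j ≠ i}),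
        (fun x => g x) '' B = B ∨ Disjoint ((fun x => g x) '' B) B) →
      B.Subsingleton ∨ B = {x | ∃ g ∈ Subgroup.closure (ρ '' {j | j ≠ i}), g a = x})
    (j₂ : Fin r) (S : Set (Fin r))
    (hSi : ∀ j ∈ S, Commute (ρ i) (ρ j))
    (hSc : ∀ k, k ∉ S → k ≠ j₂ → k ≠ i → ∀ j ∈ S, Commute (ρ k) (ρ j))
    (hSne : ∀ j ∈ S, j ≠ i)
    (hfix : ∀ x ∈ {x | ∃ g ∈ Subgroup.closure (ρ '' {j | j ≠ i}), g a = x}, ρ j₂ x = x)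
    (jw : Fin r) (hjw : jw ∈ S)
    (x₀ : Fin n) (hx₀ : x₀ ∈ {x | ∃ g ∈ Subgroup.closure (ρ '' {j | j ≠ i}), g a = x})
    (hmove : ρ jw x₀ ≠ x₀) : False := by
  set N := Subgroup.closure (ρ '' {j | j ≠ i}) with hN
  set O := {x | ∃ g ∈ N, g a = x} with hOdef
  set H := Subgroup.closure (ρ '' S) with hHdef
  have hHN : H ≤ N := Subgroup.closure_mono (Set.image_mono (f := ρ) (fun j hj => hSne j hj))
  have hOinv : ∀ g ∈ N, ∀ x ∈ O, g x ∈ O := by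
    rintro g hg x ⟨g', hg', rfl⟩
    exact ⟨g * g', mul_mem hg hg', by simp [Equiv.Perm.mul_apply]⟩
  have hOa : a ∈ O := ⟨1, one_mem _, rfl⟩
  have hbO : b ∉ O := by rintro ⟨g, hg, hga⟩; exact horb g hg hga
  have hρS : ∀ j ∈ S, ρ j ∈ H := fun j hj => Subgroup.subset_closure ⟨j, hj, rfl⟩
  have hcommi : ∀ h ∈ H, Commute (ρ i) h := by
    intro h hh
    induction hh using Subgroup.closure_induction with
    | mem x hx => obtain ⟨j, hj, rfl⟩ := hx; exact hSi j hj
    | one => exact Commute.one_right _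
    | mul x y _ _ hx hy => exact hx.mul_right hy
    | inv x _ hx => exact hx.inv_right
  have hcommk : ∀ k, k ∉ S → k ≠ j₂ → k ≠ i → ∀ h ∈ H, Commute (ρ k) h := by
    intro k hk1 hk2 hk3 h hh
    induction hh using Subgroup.closure_induction with
    | mem x hx => obtain ⟨j, hj, rfl⟩ := hx; exact hSc k hk1 hk2 hk3 j hj
    | one => exact Commute.one_right _
    | mul x y _ _ hx hy => exact hx.mul_right hy
    | inv x _ hx => exact hx.inv_right
  have key : ∀ g ∈ N, ∀ x ∈ O, ∀ y : Fin n,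
      (∃ h ∈ H, h x = y) ↔ (∃ h ∈ H, h (g x) = g y) := by
    intro g hg
    induction hg using Subgroup.closure_induction with
    | mem p hp =>
      obtain ⟨k, hk, rfl⟩ := hp
      intro x hx y
      by_cases hkS : k ∈ S
      · constructor
        · rintro ⟨h, hh, rfl⟩
          exact ⟨ρ k * h * (ρ k)⁻¹,
            mul_mem (mul_mem (hρS k hkS) hh) (inv_mem (hρS k hkS)),
            by simp [Equiv.Perm.mul_apply]⟩
        · rintro ⟨h, hh, hhx⟩
          refine ⟨(ρ k)⁻¹ * h * ρ k,
            mul_mem (mul_mem (inv_mem (hρS k hkS)) hh) (hρS k hkS), ?_⟩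
          simp [Equiv.Perm.mul_apply, hhx]
      · by_cases hkj : k = j₂
        · subst hkj
          constructor
          · rintro ⟨h, hh, rfl⟩
            exact ⟨h, hh, by rw [hfix x hx, hfix _ (hOinv h (hHN hh) x hx)]⟩
          · rintro ⟨h, hh, hhx⟩
            rw [hfix x hx] at hhx
            have hmem : h x ∈ O := hOinv h (hHN hh) x hx
            have h2 : ρ k (ρ k y) = ρ k y := by rw [← hhx]; exact hfix _ hmem
            have h3 : ρ k y = y := (ρ k).injective h2
            exact ⟨h, hh, by rw [hhx, h3]⟩
        · constructor
          · rintro ⟨h, hh, rfl⟩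
            refine ⟨h, hh, ?_⟩
            have hcm := hcommk k hkS hkj hk h hh
            calc h (ρ k x) = (h * ρ k) x := rfl
              _ = (ρ k * h) x := by rw [hcm]
              _ = ρ k (h x) := rfl
          · rintro ⟨h, hh, hhx⟩
            refine ⟨h, hh, ?_⟩
            have hcm := hcommk k hkS hkj hk h hh
            have : ρ k (h x) = ρ k y := by
              calc ρ k (h x) = (ρ k * h) x := rfl
                _ = (h * ρ k) x := by rw [hcm]
                _ = h (ρ k x) := rfl
                _ = ρ k y := hhx
            exact (ρ k).injective this
    | one => intro x hx y; simp
    | mul g₁ g₂ hg₁ hg₂ ih₁ ih₂ =>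
      intro x hx y
      simp only [Equiv.Perm.mul_apply]
      exact (ih₂ x hx y).trans (ih₁ (g₂ x) (hOinv g₂ hg₂ x hx) (g₂ y))
    | inv g hg ih =>
      intro x hx y
      have hx' : g⁻¹ x ∈ O := hOinv g⁻¹ (inv_mem hg) x hx
      simpa using (ih (g⁻¹ x) hx' (g⁻¹ y)).symm
  classical
  set B : Set (Fin n) := {y | ∃ h ∈ H, h x₀ = y} with hBdef
  have hBO : B ⊆ O := by rintro y ⟨h, hh, rfl⟩; exact hOinv h (hHN hh) x₀ hx₀
  have hblock : ∀ g ∈ N, (fun x => g x) '' B = B ∨ Disjoint ((fun x => g x) '' B) B := by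
    intro g hg
    have himg : (fun x => g x) '' B = {y | ∃ h ∈ H, h (g x₀) = y} := by
      ext z
      simp only [Set.mem_image, hBdef, Set.mem_setOf_eq]
      constructor
      · rintro ⟨y, ⟨h, hh, rfl⟩, rfl⟩
        exact (key g hg x₀ hx₀ (h x₀)).mp ⟨h, hh, rfl⟩
      · intro hz
        refine ⟨g⁻¹ z, ?_, by simp⟩
        exact (key g hg x₀ hx₀ (g⁻¹ z)).mpr (by simpa using hz)
    by_cases hmem : ∃ h ∈ H, h x₀ = g x₀
    · left
      rw [himg]
      obtain ⟨h₀, hh₀, hh₀x⟩ := hmem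
      ext z
      simp only [hBdef, Set.mem_setOf_eq]
      constructor
      · rintro ⟨h, hh, rfl⟩
        exact ⟨h * h₀, mul_mem hh hh₀, by
          simp only [Equiv.Perm.mul_apply, hh₀x]⟩
      · rintro ⟨h, hh, rfl⟩
        refine ⟨h * h₀⁻¹, mul_mem hh (inv_mem hh₀), ?_⟩
        simp only [Equiv.Perm.mul_apply]
        rw [← hh₀x, Equiv.Perm.inv_def, Equiv.symm_apply_apply]
    · right
      rw [himg, Set.disjoint_left]
      rintro z ⟨h, hh, rfl⟩ ⟨h', hh', hz'⟩
      exact hmem ⟨h⁻¹ * h', mul_mem (inv_mem hh) hh', by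
        simp only [Equiv.Perm.mul_apply, hz', Equiv.Perm.inv_def, Equiv.symm_apply_apply]⟩
  rcases hprim B hBO hblock with hsub | heq
  · exact hmove (hsub ⟨ρ jw, hρS jw hjw, rfl⟩ ⟨1, one_mem _, rfl⟩)
  · have htrans : ∀ x ∈ O, ∃ h ∈ H, h x₀ = x := by
      intro x hx; rw [← heq] at hx; exact hx
    obtain ⟨h₁, hh₁, hh₁x⟩ := htrans a hOa
    have hall : ∀ x ∈ O, x = a := by
      intro x hx
      obtain ⟨h₂, hh₂, hh₂x⟩ := htrans x hx
      have hhH : h₂ * h₁⁻¹ ∈ H := mul_mem hh₂ (inv_mem hh₁)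
      have hha : (h₂ * h₁⁻¹) a = x := by
        simp only [Equiv.Perm.mul_apply]
        rw [← hh₁x, Equiv.Perm.inv_def, Equiv.symm_apply_apply, hh₂x]
      have hc := hcommi (h₂ * h₁⁻¹) hhH
      have hix : ρ i x = (h₂ * h₁⁻¹) b := by
        rw [← hha, ← hab]
        calc ρ i ((h₂ * h₁⁻¹) a) = (ρ i * (h₂ * h₁⁻¹)) a := rfl
          _ = ((h₂ * h₁⁻¹) * ρ i) a := by rw [hc]
          _ = (h₂ * h₁⁻¹) (ρ i a) := rfl
      have hhbO : (h₂ * h₁⁻¹) b ∉ O := by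
        intro hmem'
        apply hbO
        have := hOinv (h₂ * h₁⁻¹)⁻¹ (inv_mem (hHN hhH)) _ hmem'
        simpa using this
      have hne1 : x ≠ ρ i x := by
        intro hx'
        exact hhbO (by rw [← hix, ← hx']; exact hx)
      have hfar : ∀ g ∈ N, g x ≠ ρ i x := by
        intro g hg hgx
        exact hhbO (by rw [← hix, ← hgx]; exact hOinv g hg x hx)
      have hs := huniq x (ρ i x) rfl hne1 hfar
      rcases Sym2.eq_iff.mp hs with ⟨hxa, _⟩ | ⟨hxb, _⟩
      · exact hxa
      · exact absurd (hxb ▸ hx) hbO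
    have e1 : x₀ = a := hall x₀ hx₀
    have e2 : ρ jw x₀ = a := hall _ (hOinv _ (hHN (hρS jw hjw)) x₀ hx₀)
    exact hmove (e2.trans e1.symm)

/-- If `Γ ≅ Aₙ` (`n ≥ 12`) is a string C-group with all `Γⱼ` intransitive,
`ρᵢ` swaps exactly one pair `{a,b}` across the two `Γᵢ`-orbits, and the group
induced on the orbit of `a` is primitive, then the set of indices `j` whose
generator acts nontrivially on that orbit is an interval. -/
theorem JA_is_interval_of_primitive
    {n : ℕ} (hn : 12 ≤ n) {r : ℕ} (ρ : Fin r → Equiv.Perm (Fin n))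
    (hinv : ∀ i, ρ i * ρ i = 1) (hne : ∀ i, ρ i ≠ 1)
    (hstring : ∀ i j : Fin r, ((i : ℕ) + 1 < (j : ℕ) ∨ (j : ℕ) + 1 < (i : ℕ)) →
      Commute (ρ i) (ρ j))
    (hint : ∀ I J : Set (Fin r),
      Subgroup.closure (ρ '' I) ⊓ Subgroup.closure (ρ '' J) =
        Subgroup.closure (ρ '' (I ∩ J)))
    (hgen : Subgroup.closure (Set.range ρ) = alternatingGroup (Fin n))
    (hintrans : ∀ j : Fin r,
      ¬ ∀ a b : Fin n, ∃ g ∈ Subgroup.closure (ρ '' {l | l ≠ j}), g a = b)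
    (i : Fin r) (a b : Fin n) (hab : ρ i a = b) (hab' : a ≠ b)
    (horb : ∀ g ∈ Subgroup.closure (ρ '' {j | j ≠ i}), g a ≠ b)
    (huniq : ∀ x y : Fin n, ρ i x = y → x ≠ y →
      (∀ g ∈ Subgroup.closure (ρ '' {j | j ≠ i}), g x ≠ y) → s(x, y) = s(a, b))
    (hprim : ∀ B : Set (Fin n),
      B ⊆ {x | ∃ g ∈ Subgroup.closure (ρ '' {j | j ≠ i}), g a = x} →
      (∀ g ∈ Subgroup.closure (ρ '' {j | j ≠ i}),
        (fun x => g x) '' B = B ∨ Disjoint ((fun x => g x) '' B) B) →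
      B.Subsingleton ∨ B = {x | ∃ g ∈ Subgroup.closure (ρ '' {j | j ≠ i}), g a = x}) :
    ∀ j₁ j₂ j₃ : Fin r,
      (∃ x ∈ {x | ∃ g ∈ Subgroup.closure (ρ '' {j | j ≠ i}), g a = x}, ρ j₁ x ≠ x) →
      (∃ x ∈ {x | ∃ g ∈ Subgroup.closure (ρ '' {j | j ≠ i}), g a = x}, ρ j₃ x ≠ x) →
      j₁ ≤ j₂ → j₂ ≤ j₃ →
      (∃ x ∈ {x | ∃ g ∈ Subgroup.closure (ρ '' {j | j ≠ i}), g a = x}, ρ j₂ x ≠ x) := by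
  intro j₁ j₂ j₃ h₁ h₃ h12 h23
  by_contra hcon
  push_neg at hcon
  obtain ⟨x₁, hx₁, hm₁⟩ := h₁
  obtain ⟨x₃, hx₃, hm₃⟩ := h₃
  have hj₂i : j₂ ≠ i := by
    intro h
    subst h
    have := hcon a ⟨1, one_mem _, rfl⟩
    rw [hab] at this
    exact hab' this.symm
  have h12' : j₁ ≠ j₂ := by
    intro h; subst h; exact hm₁ (hcon x₁ hx₁)
  have h23' : j₂ ≠ j₃ := by
    intro h; subst h; exact hm₃ (hcon x₃ hx₃)
  have hvne : (j₂ : ℕ) ≠ (i : ℕ) := fun h => hj₂i (Fin.ext h)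
  rcases lt_or_gt_of_ne hvne with hij | hij
  · -- j₂ < i : use the left side S = {j | j < j₂}, witness j₁
    have hv12 : (j₁ : ℕ) < (j₂ : ℕ) :=
      lt_of_le_of_ne h12 (fun h => h12' (Fin.ext h))
    refine JA_aux ρ i a b hab horb huniq hprim j₂ {j | j < j₂} ?_ ?_ ?_ hcon j₁ hv12 x₁ hx₁ hm₁
    · intro j hj
      have hj' : (j : ℕ) < (j₂ : ℕ) := hj
      exact hstring i j (Or.inr (by omega))
    · intro k hk1 hk2 hk3 j hj
      have hj' : (j : ℕ) < (j₂ : ℕ) := hj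
      have hk1' : ¬ (k : ℕ) < (j₂ : ℕ) := hk1
      have hk2' : (k : ℕ) ≠ (j₂ : ℕ) := fun h => hk2 (Fin.ext h)
      exact hstring k j (Or.inr (by omega))
    · intro j hj
      have hj' : (j : ℕ) < (j₂ : ℕ) := hj
      exact fun h => absurd (congrArg Fin.val h) (by omega)
  · -- i < j₂ : use the right side S = {j | j₂ < j}, witness j₃
    have hv23 : (j₂ : ℕ) < (j₃ : ℕ) :=
      lt_of_le_of_ne h23 (fun h => h23' (Fin.ext h))
    refine JA_aux ρ i a b hab horb huniq hprim j₂ {j | j₂ < j} ?_ ?_ ?_ hcon j₃ hv23 x₃ hx₃ hm₃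
    · intro j hj
      have hj' : (j₂ : ℕ) < (j : ℕ) := hj
      exact hstring i j (Or.inl (by omega))
    · intro k hk1 hk2 hk3 j hj
      have hj' : (j₂ : ℕ) < (j : ℕ) := hj
      have hk1' : ¬ (j₂ : ℕ) < (k : ℕ) := hk1
      have hk2' : (k : ℕ) ≠ (j₂ : ℕ) := fun h => hk2 (Fin.ext h)
      exact hstring k j (Or.inl (by omega))
    · intro j hj
      have hj' : (j₂ : ℕ) < (j : ℕ) := hj
      exact fun h => absurd (congrArg Fin.val h) (by omega)
end
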